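/- Let C be a triangulated category with a weight structure w and a t-structure t (homological convention). Then w is left adjacent to t (meaning C_{w≤0} ⊥ C_{t≥1} and C_{w≥0} ⊥ C_{t≤-1}) if and only if C_{w≥0} = C_{t≥0}. -/

import Mathlib

open CategoryTheory Category Limits Pretriangulated ZeroObject Opposite

universe v u u₂ v₂

variable (C : Type u) [Category.{v} C] [Preadditive C] [HasZeroObject C]
  [HasShift C ℤ] [∀ n : ℤ, (CategoryTheory.shiftFunctor C n).Additive] [Pretriangulated C]

/-- `X` is a retract (direct summand) of `Y`. -/
def IsRetract {C : Type u} [Category.{v} C] (X Y : C) : Prop :=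
  ∃ (s : X ⟶ Y) (r : Y ⟶ X), s ≫ r = 𝟙 X

/-- A weight structure on a pretriangulated category `C`, in the homological convention:
`le` is the class `C_{w≤0}` and `ge` is the class `C_{w≥0}`. -/
structure WeightStructure where
  le : Set C
  ge : Set C
  le_retract : ∀ ⦃X Y : C⦄, IsRetract X Y → Y ∈ le → X ∈ le
  ge_retract : ∀ ⦃X Y : C⦄, IsRetract X Y → Y ∈ ge → X ∈ ge
  le_shift : ∀ X : C, X ∈ le → X⟦(-1 : ℤ)⟧ ∈ le
  ge_shift : ∀ X : C, X ∈ ge → X⟦(1 : ℤ)⟧ ∈ ge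
  orth : ∀ ⦃X Y : C⦄, X ∈ le → Y ∈ ge → ∀ f : X ⟶ Y⟦(1 : ℤ)⟧, f = 0
  decomp : ∀ M : C, ∃ (L R : C) (f : L ⟶ M) (g : M ⟶ R) (h : R ⟶ L⟦(1 : ℤ)⟧),
    Triangle.mk f g h ∈ (distTriang C) ∧ L ∈ le ∧ R⟦(-1 : ℤ)⟧ ∈ ge

/-- A t-structure on a pretriangulated category `C`, in the homological convention:
`le` is the class `C_{t≤0}` and `ge` is the class `C_{t≥0}`. -/
structure HomTStructure where
  le : Set C
  ge : Set C
  le_iso : ∀ ⦃X Y : C⦄, (X ≅ Y) → Y ∈ le → X ∈ le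
  ge_iso : ∀ ⦃X Y : C⦄, (X ≅ Y) → Y ∈ ge → X ∈ ge
  le_shift : ∀ X : C, X ∈ le → X⟦(-1 : ℤ)⟧ ∈ le
  ge_shift : ∀ X : C, X ∈ ge → X⟦(1 : ℤ)⟧ ∈ ge
  orth : ∀ ⦃X Y : C⦄, X⟦(-1 : ℤ)⟧ ∈ ge → Y ∈ le → ∀ f : X ⟶ Y, f = 0
  decomp : ∀ M : C, ∃ (L R : C) (f : L ⟶ M) (g : M ⟶ R) (h : R ⟶ L⟦(1 : ℤ)⟧),
    Triangle.mk f g h ∈ (distTriang C) ∧ L ∈ ge ∧ R⟦(1 : ℤ)⟧ ∈ le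

/-- A contravariant additive functor is cohomological if it sends distinguished
triangles to exact sequences. -/
def IsCohomological {A : Type u₂} [Category.{v₂} A] [Abelian A]
    (H : Cᵒᵖ ⥤ A) [H.Additive] : Prop :=
  ∀ (T : Triangle C), ∀ hT : T ∈ distTriang C,
    (ShortComplex.mk (H.map T.mor₂.op) (H.map T.mor₁.op) (by
      rw [← H.map_comp, ← op_comp, comp_distTriang_mor_zero₁₂ _ hT, op_zero, H.map_zero])).Exact

/-- w is left adjacent to t if and only if C_{w≥0} = C_{t≥0}. -/
theorem left_adjacent_iff_ge_eq (w : WeightStructure C) (t : HomTStructure C) :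
    ((∀ X ∈ w.le, ∀ Y : C, Y⟦(-1 : ℤ)⟧ ∈ t.ge → ∀ f : X ⟶ Y, f = 0) ∧
     (∀ X ∈ w.ge, ∀ Y : C, Y⟦(1 : ℤ)⟧ ∈ t.le → ∀ f : X ⟶ Y, f = 0)) ↔
    w.ge = t.ge := by
  -- the canonical isomorphisms `X⟦1⟧⟦-1⟧ ≅ X` and `X⟦-1⟧⟦1⟧ ≅ X`
  have eP : ∀ X : C, X⟦(1 : ℤ)⟧⟦(-1 : ℤ)⟧ ≅ X := fun X =>
    (shiftFunctorCompIsoId C (1 : ℤ) (-1 : ℤ) (by norm_num)).app X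
  have eN : ∀ X : C, X⟦(-1 : ℤ)⟧⟦(1 : ℤ)⟧ ≅ X := fun X =>
    (shiftFunctorCompIsoId C (-1 : ℤ) (1 : ℤ) (by norm_num)).app X
  constructor
  · rintro ⟨hA, hB⟩
    apply Set.ext
    intro M
    constructor
    · -- `w.ge ⊆ t.ge`
      intro hM
      obtain ⟨L, R, f, g, h, hdist, hL, hR⟩ := t.decomp M
      have hg : g = 0 := hB M hM R hR g
      have hRle : R ∈ t.le := t.le_iso (eP R).symm (t.le_shift _ hR)
      have hL1 : (L⟦(1 : ℤ)⟧)⟦(-1 : ℤ)⟧ ∈ t.ge := t.ge_iso (eP L) hL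
      have hRzero : IsZero R := by
        rw [IsZero.iff_id_eq_zero]
        obtain ⟨k, hk⟩ : ∃ k : L⟦(1 : ℤ)⟧ ⟶ R, 𝟙 R = h ≫ k := Triangle.yoneda_exact₃ _ hdist (𝟙 R)
          (by show g ≫ 𝟙 R = 0; rw [hg, zero_comp])
        rw [hk, t.orth hL1 hRle k, comp_zero]
      have hiso : IsIso f := (Triangle.isZero₃_iff_isIso₁ _ hdist).1 hRzero
      exact t.ge_iso (asIso f).symm hL
    · -- `t.ge ⊆ w.ge`
      intro hM
      obtain ⟨L, R, f, g, h, hdist, hL, hR⟩ := w.decomp (M⟦(1 : ℤ)⟧)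
      have hf : f = 0 := hA L hL (M⟦(1 : ℤ)⟧) (t.ge_iso (eP M) hM) f
      obtain ⟨r, hr⟩ : ∃ r : R ⟶ M⟦(1 : ℤ)⟧, 𝟙 (M⟦(1 : ℤ)⟧) = g ≫ r := Triangle.yoneda_exact₂ _ hdist (𝟙 (M⟦(1 : ℤ)⟧))
        (by show f ≫ 𝟙 _ = 0; rw [hf, zero_comp])
      -- `M` is a retract of `R⟦-1⟧`
      have hret : IsRetract M (R⟦(-1 : ℤ)⟧) := by
        refine ⟨(eP M).inv ≫ (shiftFunctor C (-1 : ℤ)).map g,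
          (shiftFunctor C (-1 : ℤ)).map r ≫ (eP M).hom, ?_⟩
        rw [assoc, ← Functor.map_comp_assoc, ← hr, CategoryTheory.Functor.map_id,
          id_comp, Iso.inv_hom_id]
      exact w.ge_retract hret hR
  · rintro heq
    constructor
    · intro X hX Y hY f
      have hY' : Y⟦(-1 : ℤ)⟧ ∈ w.ge := by rw [heq]; exact hY
      have h0 : f ≫ (eN Y).inv = 0 := w.orth hX hY' _
      have : f = (f ≫ (eN Y).inv) ≫ (eN Y).hom := by
        rw [assoc, Iso.inv_hom_id, comp_id]
      rw [this, h0, zero_comp]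
    · intro X hX Y hY f
      have hX' : (X⟦(1 : ℤ)⟧)⟦(-1 : ℤ)⟧ ∈ t.ge := by
        refine t.ge_iso (eP X) ?_
        rw [← heq]; exact hX
      have h0 : (shiftFunctor C (1 : ℤ)).map f = 0 := t.orth hX' hY _
      exact (shiftFunctor C (1 : ℤ)).map_injective
        (by rw [h0, Functor.map_zero])
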